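/- Let V be a finite set with weights μ:V→ℝ≥0, let r ≥ 0, g ≥ 0, and let (R,B) be a pair of subsets of V with Σ_{v∈R} μ(v) ≤ r. Let Ψ be a finite sequence consisting only of SAVE, LOAD, and DELETE transitions of a single processor that is valid starting from (R,B) (i.e., every transition's precondition holds when applied and Σ_{v∈R_t} μ(v) ≤ r holds throughout), and let (R',B') be the configuration it reaches. Then there exists a valid sequence Ψ' starting from (R,B), consisting of a block of SAVE transitions followed by a block of DELETE transitions followed by a block of LOAD transitions, which also reaches (R',B') and whose total cost (the sum of μ(v)·g over its SAVE and LOAD transitions) is at most the total cost of Ψ. -/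

import Mathlib

namespace MBSP

/-- A transition (pebbling move) of a single processor. -/
inductive Op (ν : Type) where
  | load : ν → Op ν
  | save : ν → Op ν
  | compute : ν → Op ν
  | delete : ν → Op ν
deriving DecidableEq

/-- An MBSP instance: a DAG with compute weights `ω`, memory weights `μ`,
`P` processors, cache capacity `r`, communication cost `g` and synchronization cost `L`. -/
structure Inst (ν : Type) where
  edge : ν → ν → Prop
  ω : ν → ℝ
  μ : ν → ℝ
  P : ℕ
  r : ℝ
  g : ℝ
  L : ℝ

variable {ν : Type} [DecidableEq ν]

def isSource (I : Inst ν) (v : ν) : Prop := ¬ ∃ u, I.edge u v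

def isSink (I : Inst ν) (v : ν) : Prop := ¬ ∃ u, I.edge v u

def Acyclic (I : Inst ν) : Prop := ∀ v, ¬ Relation.TransGen I.edge v v

def opCost (I : Inst ν) : Op ν → ℝ
  | .load v => I.μ v * I.g
  | .save v => I.μ v * I.g
  | .compute v => I.ω v
  | .delete _ => 0

def applyOp (R B : Finset ν) : Op ν → Finset ν × Finset ν
  | .load v => (insert v R, B)
  | .save v => (R, insert v B)
  | .compute v => (insert v R, B)
  | .delete v => (R.erase v, B)

def opOK (I : Inst ν) (R B : Finset ν) : Op ν → Prop
  | .load v => v ∈ B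
  | .save v => v ∈ R
  | .compute v => (∃ u, I.edge u v) ∧ ∀ u, I.edge u v → u ∈ R
  | .delete _ => True

/-- The memory bound for a cache content `R`. -/
def memOK (I : Inst ν) (R : Finset ν) : Prop := ∑ v ∈ R, I.μ v ≤ I.r

/-- Run a sequence of transitions of one processor on a pair (cache, slow memory). -/
def run (R B : Finset ν) : List (Op ν) → Finset ν × Finset ν
  | [] => (R, B)
  | op :: rest => run (applyOp R B op).1 (applyOp R B op).2 rest

/-- Validity of a sequence of transitions of one processor: every precondition holds
when the transition is applied and the memory bound holds throughout. -/
def seqValid (I : Inst ν) (R B : Finset ν) : List (Op ν) → Prop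
  | [] => True
  | op :: rest => opOK I R B op ∧ memOK I (applyOp R B op).1 ∧
      seqValid I (applyOp R B op).1 (applyOp R B op).2 rest

/-- A superstep: for every processor, a compute phase (computes and deletes),
then a save phase, a delete phase and a load phase. -/
structure Superstep (ν : Type) (P : ℕ) where
  comp : Fin P → List (Op ν)
  save : Fin P → List ν
  del : Fin P → List ν
  load : Fin P → List ν

structure Config (ν : Type) (P : ℕ) where
  R : Fin P → Finset ν
  B : Finset ν

abbrev Schedule (ν : Type) (P : ℕ) := List (Superstep ν P)

variable {P : ℕ}

def compOnly (l : List (Op ν)) : Prop :=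
  ∀ op ∈ l, (∃ v, op = Op.compute v) ∨ (∃ v, op = Op.delete v)

def afterComp (c : Config ν P) (S : Superstep ν P) (p : Fin P) : Finset ν :=
  (run (c.R p) c.B (S.comp p)).1

/-- The shared slow memory after the save phases of all processors. -/
def newB (c : Config ν P) (S : Superstep ν P) : Finset ν :=
  c.B ∪ Finset.univ.biUnion (fun p => (S.save p).toFinset)

def afterDel (c : Config ν P) (S : Superstep ν P) (p : Fin P) : Finset ν :=
  (S.del p).foldl Finset.erase (afterComp c S p)

def afterLoad (c : Config ν P) (S : Superstep ν P) (p : Fin P) : Finset ν :=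
  afterDel c S p ∪ (S.load p).toFinset

/-- The configuration reached after executing a superstep. -/
def stepConfig (c : Config ν P) (S : Superstep ν P) : Config ν P :=
  ⟨fun p => afterLoad c S p, newB c S⟩

/-- Validity of a superstep at a configuration. -/
def ssValid (I : Inst ν) (c : Config ν I.P) (S : Superstep ν I.P) : Prop :=
  (∀ p, compOnly (S.comp p)) ∧
  (∀ p, seqValid I (c.R p) c.B (S.comp p)) ∧
  (∀ p, ∀ v ∈ S.save p, v ∈ afterComp c S p) ∧
  (∀ p, ∀ v ∈ S.load p, v ∈ newB c S) ∧
  (∀ p, memOK I (afterLoad c S p))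

def runSched (c : Config ν P) : Schedule ν P → Config ν P
  | [] => c
  | S :: rest => runSched (stepConfig c S) rest

def schedValidFrom (I : Inst ν) (c : Config ν I.P) : Schedule ν I.P → Prop
  | [] => True
  | S :: rest => ssValid I c S ∧ schedValidFrom I (stepConfig c S) rest

/-- `B` is exactly the set of sources of the DAG. -/
def initB (I : Inst ν) (B : Finset ν) : Prop := ∀ v, v ∈ B ↔ isSource I v

/-- A valid MBSP schedule: starts with empty caches and the sources in slow memory,
every transition is legal and the memory bound holds throughout, and at the end
every sink is in slow memory. -/
def Valid (I : Inst ν) (sched : Schedule ν I.P) : Prop :=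
  ∃ B0 : Finset ν, initB I B0 ∧
    schedValidFrom I ⟨fun _ => ∅, B0⟩ sched ∧
    ∀ v, isSink I v → v ∈ (runSched (⟨fun _ => ∅, B0⟩ : Config ν I.P) sched).B

def listCost (I : Inst ν) (l : List (Op ν)) : ℝ := (l.map (opCost I)).sum

def ioCost (I : Inst ν) (l : List ν) : ℝ := (l.map (fun v => I.μ v * I.g)).sum

/-- The synchronous cost of a superstep. -/
noncomputable def ssCost (I : Inst ν) (S : Superstep ν I.P) : ℝ :=
  (⨆ p : Fin I.P, listCost I (S.comp p)) + (⨆ p : Fin I.P, ioCost I (S.save p)) +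
    (⨆ p : Fin I.P, ioCost I (S.load p)) + I.L

/-- The synchronous cost of a schedule. -/
noncomputable def syncCost (I : Inst ν) (sched : Schedule ν I.P) : ℝ :=
  (sched.map (ssCost I)).sum

/-- Finishing times of the saves in a save phase starting at time `t`. -/
def saveFinishes (I : Inst ν) : ℝ → List ν → List (ν × ℝ)
  | _, [] => []
  | t, v :: rest => (v, t + I.μ v * I.g) :: saveFinishes I (t + I.μ v * I.g) rest

def minSaveTime (entries : List (ν × ℝ)) (v : ν) : Option ℝ :=
  ((entries.filter (fun e => e.1 == v)).map Prod.snd).min?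

/-- Finishing time of a load phase: each load waits for the value to be available
in slow memory (time `Γ v`). -/
def loadFold (I : Inst ν) (Γ : ν → Option ℝ) : ℝ → List ν → ℝ
  | t, [] => t
  | t, v :: rest => loadFold I Γ (max t ((Γ v).getD 0) + I.μ v * I.g) rest

/-- One superstep of the asynchronous execution: updates the finishing time of
every processor and the availability times `Γ` of the values in slow memory. -/
def asyncSS (I : Inst ν) (S : Superstep ν I.P)
    (st : (Fin I.P → ℝ) × (ν → Option ℝ)) : (Fin I.P → ℝ) × (ν → Option ℝ) :=
  let t1 : Fin I.P → ℝ := fun p => st.1 p + listCost I (S.comp p)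
  let entries : List (ν × ℝ) :=
    ((List.finRange I.P).map (fun p => saveFinishes I (t1 p) (S.save p))).flatten
  let Γ' : ν → Option ℝ := fun v => (st.2 v).orElse (fun _ => minSaveTime entries v)
  let t2 : Fin I.P → ℝ := fun p => t1 p + ioCost I (S.save p)
  (fun p => loadFold I Γ' (t2 p) (S.load p), Γ')

def asyncRun (I : Inst ν) (st : (Fin I.P → ℝ) × (ν → Option ℝ)) :
    Schedule ν I.P → (Fin I.P → ℝ) × (ν → Option ℝ)
  | [] => st
  | S :: rest => asyncRun I (asyncSS I S st) rest

/-- The asynchronous cost (makespan) of a schedule. -/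
noncomputable def asyncCost (I : Inst ν) (sched : Schedule ν I.P) : ℝ :=
  ⨆ p : Fin I.P, (asyncRun I (fun _ => (0 : ℝ), fun _ => none) sched).1 p

end MBSP

namespace MBSP

/-- A degenerate instance used to state the communication-phase reordering lemma:
only the memory weights `μ`, the capacity `r` and the communication cost `g` matter
for sequences of SAVE, LOAD and DELETE transitions. -/
def commInst {ν : Type} (μ : ν → ℝ) (r g : ℝ) : Inst ν where
  edge := fun _ _ => False
  ω := fun _ => 0
  μ := μ
  P := 1
  r := r
  g := g
  L := 0

section Aux

variable {ν : Type} [DecidableEq ν]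

lemma run_append' (R B : Finset ν) (a b : List (Op ν)) :
    run R B (a ++ b) = run (run R B a).1 (run R B a).2 b := by
  induction a generalizing R B with
  | nil => rfl
  | cons op rest ih =>
    simp only [List.cons_append, run]
    exact ih _ _

lemma seqValid_append' (I : Inst ν) (R B : Finset ν) (a b : List (Op ν)) :
    seqValid I R B (a ++ b) ↔
      seqValid I R B a ∧ seqValid I (run R B a).1 (run R B a).2 b := by
  induction a generalizing R B with
  | nil => simp [seqValid, run]
  | cons op rest ih => simp [seqValid, run, ih, and_assoc]

lemma listCost_append' (I : Inst ν) (a b : List (Op ν)) :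
    listCost I (a ++ b) = listCost I a + listCost I b := by
  simp [listCost]

lemma sum_insert_le' {f : ν → ℝ} (hf : ∀ v, 0 ≤ f v) (a : ν) (s : Finset ν) :
    ∑ v ∈ insert a s, f v ≤ f a + ∑ v ∈ s, f v := by
  by_cases h : a ∈ s
  · rw [Finset.insert_eq_self.mpr h]
    exact le_add_of_nonneg_left (hf a)
  · rw [Finset.sum_insert h]

lemma analysis (μ : ν → ℝ) (hμ : ∀ v, 0 ≤ μ v) (r g : ℝ) (hg : 0 ≤ g) :
    ∀ (Ψ : List (Op ν)) (R B : Finset ν),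
      (∀ op ∈ Ψ, ∀ v : ν, op ≠ Op.compute v) →
      seqValid (commInst μ r g) R B Ψ →
      (∑ v ∈ R, μ v ≤ r) →
      B ⊆ (run R B Ψ).2 ∧
      (run R B Ψ).2 \ B ⊆ R ∧
      (run R B Ψ).1 \ R ⊆ (run R B Ψ).2 ∧
      ((∑ v ∈ (run R B Ψ).2 \ B, μ v * g) + (∑ v ∈ (run R B Ψ).1 \ R, μ v * g)
        ≤ listCost (commInst μ r g) Ψ) ∧
      (∑ v ∈ (run R B Ψ).1, μ v ≤ r) := by
  intro Ψ
  induction Ψ with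
  | nil =>
    intro R B _ _ hmem
    simp [run, listCost, hmem]
  | cons op rest ih =>
    intro R B hcomm hvalid hmem
    obtain ⟨hop, hm, hrest⟩ := hvalid
    have hcomm' : ∀ o ∈ rest, ∀ v : ν, o ≠ Op.compute v :=
      fun o ho => hcomm o (List.mem_cons_of_mem _ ho)
    have hμg : ∀ v : ν, 0 ≤ μ v * g := fun v => mul_nonneg (hμ v) hg
    cases op with
    | compute v => exact absurd rfl (hcomm _ (List.mem_cons_self) v)
    | load v =>
      have hvB : v ∈ B := hop
      have hm' : ∑ u ∈ insert v R, μ u ≤ r := hm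
      obtain ⟨ih1, ih2, ih3, ih4, ih5⟩ := ih (insert v R) B hcomm' hrest hm'
      simp only [run, applyOp] at *
      refine ⟨ih1, ?_, ?_, ?_, ih5⟩
      · intro u hu
        have := ih2 hu
        rcases Finset.mem_insert.mp this with h | h
        · exact absurd (h ▸ hvB) (Finset.mem_sdiff.mp hu).2
        · exact h
      · intro u hu
        rcases Finset.mem_sdiff.mp hu with ⟨hu1, hu2⟩
        by_cases huv : u = v
        · exact ih1 (huv ▸ hvB)
        · exact ih3 (Finset.mem_sdiff.mpr ⟨hu1, by simp [huv, hu2]⟩)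
      · have hsub : (run (insert v R) B rest).1 \ R ⊆
            insert v ((run (insert v R) B rest).1 \ insert v R) := by
          intro u hu
          rcases Finset.mem_sdiff.mp hu with ⟨hu1, hu2⟩
          by_cases huv : u = v
          · simp [huv]
          · exact Finset.mem_insert_of_mem
              (Finset.mem_sdiff.mpr ⟨hu1, by simp [huv, hu2]⟩)
        have h1 : ∑ u ∈ (run (insert v R) B rest).1 \ R, μ u * g ≤
            μ v * g + ∑ u ∈ (run (insert v R) B rest).1 \ insert v R, μ u * g :=
          le_trans (Finset.sum_le_sum_of_subset_of_nonneg hsub (fun u _ _ => hμg u))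
            (sum_insert_le' hμg v _)
        simp only [listCost, List.map_cons, List.sum_cons, opCost, commInst]
        calc (∑ u ∈ (run (insert v R) B rest).2 \ B, μ u * g) +
              ∑ u ∈ (run (insert v R) B rest).1 \ R, μ u * g
            ≤ (∑ u ∈ (run (insert v R) B rest).2 \ B, μ u * g) +
              (μ v * g + ∑ u ∈ (run (insert v R) B rest).1 \ insert v R, μ u * g) := by
              linarith
          _ ≤ μ v * g + listCost (commInst μ r g) rest := by
              simp only [listCost] at ih4 ⊢; linarith
    | save v =>
      have hvR : v ∈ R := hop
      have hm' : ∑ u ∈ R, μ u ≤ r := hm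
      obtain ⟨ih1, ih2, ih3, ih4, ih5⟩ := ih R (insert v B) hcomm' hrest hm'
      simp only [run, applyOp] at *
      refine ⟨fun u hu => ih1 (Finset.mem_insert_of_mem hu), ?_, ih3, ?_, ih5⟩
      · intro u hu
        rcases Finset.mem_sdiff.mp hu with ⟨hu1, hu2⟩
        by_cases huv : u = v
        · exact huv ▸ hvR
        · exact ih2 (Finset.mem_sdiff.mpr ⟨hu1, by simp [huv, hu2]⟩)
      · have hsub : (run R (insert v B) rest).2 \ B ⊆
            insert v ((run R (insert v B) rest).2 \ insert v B) := by
          intro u hu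
          rcases Finset.mem_sdiff.mp hu with ⟨hu1, hu2⟩
          by_cases huv : u = v
          · simp [huv]
          · exact Finset.mem_insert_of_mem
              (Finset.mem_sdiff.mpr ⟨hu1, by simp [huv, hu2]⟩)
        have h1 : ∑ u ∈ (run R (insert v B) rest).2 \ B, μ u * g ≤
            μ v * g + ∑ u ∈ (run R (insert v B) rest).2 \ insert v B, μ u * g :=
          le_trans (Finset.sum_le_sum_of_subset_of_nonneg hsub (fun u _ _ => hμg u))
            (sum_insert_le' hμg v _)
        simp only [listCost, List.map_cons, List.sum_cons, opCost, commInst] at ih4 h1 ⊢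
        linarith
    | delete v =>
      have hm' : ∑ u ∈ R.erase v, μ u ≤ r := hm
      obtain ⟨ih1, ih2, ih3, ih4, ih5⟩ := ih (R.erase v) B hcomm' hrest hm'
      simp only [run, applyOp] at *
      refine ⟨ih1, fun u hu => Finset.erase_subset _ _ (ih2 hu), ?_, ?_, ih5⟩
      · intro u hu
        rcases Finset.mem_sdiff.mp hu with ⟨hu1, hu2⟩
        exact ih3 (Finset.mem_sdiff.mpr ⟨hu1, fun h => hu2 (Finset.erase_subset _ _ h)⟩)
      · have hsub : (run (R.erase v) B rest).1 \ R ⊆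
            (run (R.erase v) B rest).1 \ R.erase v := by
          intro u hu
          rcases Finset.mem_sdiff.mp hu with ⟨hu1, hu2⟩
          exact Finset.mem_sdiff.mpr ⟨hu1, fun h => hu2 (Finset.erase_subset _ _ h)⟩
        have h1 := Finset.sum_le_sum_of_subset_of_nonneg hsub (fun u _ _ => hμg u)
        simp only [listCost, List.map_cons, List.sum_cons, opCost]
        simp only [listCost] at ih4
        linarith

lemma saves_run (s : List ν) : ∀ R B : Finset ν,
    run R B (s.map Op.save) = (R, B ∪ s.toFinset) := by
  induction s with
  | nil => intro R B; simp [run]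
  | cons v s ih =>
    intro R B
    simp only [List.map_cons, run, applyOp, ih, List.toFinset_cons]
    congr 1
    ext u; simp [or_comm, or_left_comm]

lemma saves_valid (μ : ν → ℝ) (r g : ℝ) (s : List ν) : ∀ R B : Finset ν,
    (∀ v ∈ s, v ∈ R) → memOK (commInst μ r g) R →
    seqValid (commInst μ r g) R B (s.map Op.save) := by
  induction s with
  | nil => intro R B _ _; trivial
  | cons v s ih =>
    intro R B hs hm
    refine ⟨hs v (List.mem_cons_self), hm, ?_⟩
    exact ih R (insert v B) (fun u hu => hs u (List.mem_cons_of_mem _ hu)) hm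

lemma deletes_run (d : List ν) : ∀ R B : Finset ν,
    run R B (d.map Op.delete) = (d.foldl Finset.erase R, B) := by
  induction d with
  | nil => intro R B; simp [run]
  | cons v d ih => intro R B; simp [run, applyOp, ih, List.foldl_cons]

lemma foldl_erase_eq (d : List ν) : ∀ R : Finset ν,
    d.foldl Finset.erase R = R \ d.toFinset := by
  induction d with
  | nil => intro R; simp
  | cons v d ih =>
    intro R
    simp only [List.foldl_cons, ih, List.toFinset_cons]
    ext u; simp only [Finset.mem_sdiff, Finset.mem_erase, Finset.mem_insert]
    tauto

lemma deletes_valid (μ : ν → ℝ) (hμ : ∀ v, 0 ≤ μ v) (r g : ℝ) (d : List ν) :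
    ∀ R B : Finset ν, memOK (commInst μ r g) R →
    seqValid (commInst μ r g) R B (d.map Op.delete) := by
  induction d with
  | nil => intro R B _; trivial
  | cons v d ih =>
    intro R B hm
    have hm' : memOK (commInst μ r g) (R.erase v) :=
      le_trans (Finset.sum_le_sum_of_subset_of_nonneg (Finset.erase_subset _ _)
        (fun u _ _ => hμ u)) hm
    exact ⟨trivial, hm', ih _ B hm'⟩

lemma loads_run (l : List ν) : ∀ R B : Finset ν,
    run R B (l.map Op.load) = (R ∪ l.toFinset, B) := by
  induction l with
  | nil => intro R B; simp [run]
  | cons v l ih =>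
    intro R B
    simp only [List.map_cons, run, applyOp, ih, List.toFinset_cons]
    congr 1
    ext u; simp [or_comm, or_left_comm]

lemma loads_valid (μ : ν → ℝ) (hμ : ∀ v, 0 ≤ μ v) (r g : ℝ) (l : List ν) :
    ∀ R B : Finset ν, (∀ v ∈ l, v ∈ B) →
    (∑ v ∈ R ∪ l.toFinset, μ v ≤ r) →
    seqValid (commInst μ r g) R B (l.map Op.load) := by
  induction l with
  | nil => intro R B _ _; trivial
  | cons v l ih =>
    intro R B hl hm
    have hset : insert v R ∪ l.toFinset = R ∪ (v :: l).toFinset := by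
      ext u; simp [or_comm, or_left_comm]
    have hm1 : memOK (commInst μ r g) (insert v R) := by
      refine le_trans (Finset.sum_le_sum_of_subset_of_nonneg ?_ (fun u _ _ => hμ u)) hm
      intro u hu
      rcases Finset.mem_insert.mp hu with h | h
      · simp [h]
      · exact Finset.mem_union_left _ h
    refine ⟨hl v (List.mem_cons_self), hm1, ?_⟩
    exact ih (insert v R) B (fun u hu => hl u (List.mem_cons_of_mem _ hu))
      (by rw [hset]; exact hm)

lemma listCost_saves (μ : ν → ℝ) (r g : ℝ) (s : List ν) :
    listCost (commInst μ r g) (s.map Op.save) = (s.map (fun v => μ v * g)).sum := by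
  induction s with
  | nil => rfl
  | cons v s ih => simp [listCost, opCost, commInst] at ih ⊢; linarith

lemma listCost_deletes (μ : ν → ℝ) (r g : ℝ) (d : List ν) :
    listCost (commInst μ r g) (d.map Op.delete) = 0 := by
  induction d with
  | nil => rfl
  | cons v d ih => simp [listCost, opCost] at ih ⊢; exact ih

lemma listCost_loads (μ : ν → ℝ) (r g : ℝ) (l : List ν) :
    listCost (commInst μ r g) (l.map Op.load) = (l.map (fun v => μ v * g)).sum := by
  induction l with
  | nil => rfl
  | cons v l ih => simp [listCost, opCost, commInst] at ih ⊢; linarith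

end Aux

/-- Any valid sequence `Ψ` of SAVE/LOAD/DELETE transitions of a
single processor starting from a configuration `(R, B)` satisfying the memory bound
can be replaced by a valid sequence consisting of a block of SAVEs, then a block of
DELETEs, then a block of LOADs, reaching the same configuration with total cost at
most that of `Ψ`. -/
theorem statement_13 {ν : Type} [Fintype ν] [DecidableEq ν]
    (μ : ν → ℝ) (hμ : ∀ v, 0 ≤ μ v) (r g : ℝ) (hr : 0 ≤ r) (hg : 0 ≤ g)
    (R B : Finset ν) (hmem : ∑ v ∈ R, μ v ≤ r)
    (Ψ : List (Op ν)) (hcomm : ∀ op ∈ Ψ, ∀ v : ν, op ≠ Op.compute v)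
    (hvalid : seqValid (commInst μ r g) R B Ψ) :
    ∃ s d l : List ν,
      seqValid (commInst μ r g) R B
        (s.map Op.save ++ d.map Op.delete ++ l.map Op.load) ∧
      run R B (s.map Op.save ++ d.map Op.delete ++ l.map Op.load) = run R B Ψ ∧
      listCost (commInst μ r g) (s.map Op.save ++ d.map Op.delete ++ l.map Op.load)
        ≤ listCost (commInst μ r g) Ψ := by
  obtain ⟨h1, h2, h3, h4, h5⟩ := analysis μ hμ r g hg Ψ R B hcomm hvalid hmem
  set R' := (run R B Ψ).1 with hR'
  set B' := (run R B Ψ).2 with hB'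
  refine ⟨(B' \ B).toList, (R \ R').toList, (R' \ R).toList, ?_, ?_, ?_⟩
  all_goals
    have e1 : run R B ((B' \ B).toList.map Op.save) = (R, B') := by
      rw [saves_run]
      congr 1
      rw [Finset.toList_toFinset]
      exact Finset.union_sdiff_of_subset h1
    have e2 : run R B' ((R \ R').toList.map Op.delete) = (R ∩ R', B') := by
      rw [deletes_run, foldl_erase_eq, Finset.toList_toFinset,
        Finset.sdiff_sdiff_self_left]
    have e3 : run (R ∩ R') B' ((R' \ R).toList.map Op.load) = (R', B') := by
      rw [loads_run, Finset.toList_toFinset]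
      congr 1
      ext u
      simp only [Finset.mem_union, Finset.mem_inter, Finset.mem_sdiff]
      tauto
  · rw [seqValid_append', seqValid_append', run_append', e1]
    dsimp only
    rw [e2]
    dsimp only
    refine ⟨⟨?_, ?_⟩, ?_⟩
    · exact saves_valid μ r g _ R B
        (fun v hv => h2 (Finset.mem_toList.mp hv)) hmem
    · exact deletes_valid μ hμ r g _ R B' hmem
    · refine loads_valid μ hμ r g _ _ _
        (fun v hv => h3 (Finset.mem_toList.mp hv)) ?_
      have : (R ∩ R') ∪ (R' \ R).toList.toFinset = R' := by
        rw [Finset.toList_toFinset]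
        ext u
        simp only [Finset.mem_union, Finset.mem_inter, Finset.mem_sdiff]
        tauto
      rw [this]
      exact h5
  · rw [run_append', run_append', e1]
    dsimp only
    rw [e2]
    dsimp only
    rw [e3]
  · rw [listCost_append', listCost_append', listCost_saves, listCost_deletes,
      listCost_loads]
    have hs : ((B' \ B).toList.map (fun v => μ v * g)).sum
        = ∑ v ∈ B' \ B, μ v * g := Finset.sum_map_toList _ _
    have hl : ((R' \ R).toList.map (fun v => μ v * g)).sum
        = ∑ v ∈ R' \ R, μ v * g := Finset.sum_map_toList _ _
    rw [hs, hl]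
    linarith

end MBSP
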